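/- Let A be a (not necessarily unital) associative algebra satisfying generalized commutativity of degree n ≥ 2 (a_1⋯a_n = a_n⋯a_1). If n ≢ 1 (mod 4), then A is eventually commutative of degree n+1; in general (including n ≡ 1 mod 4), A is eventually commutative of degree n+2. -/

import Mathlib

set_option linter.unusedSectionVars false
set_option maxHeartbeats 1000000

/-- Product of a nonempty list in a (non-unital) multiplicative structure;
junk value `0` for the empty list. -/
def listMul {A : Type*} [Mul A] [Zero A] : List A → A
  | [] => 0
  | [x] => x
  | x :: y :: l => x * listMul (y :: l)

/-- The product `a 0 * a 1 * ⋯ * a (k-1)`. -/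
def finProd {A : Type*} [Mul A] [Zero A] {k : ℕ} (a : Fin k → A) : A :=
  listMul (List.ofFn a)

/-- `listMul` or `listMul ∘ reverse` according to the parity of `k`. -/
def Fm {A : Type*} [Mul A] [Zero A] (k : ℕ) (l : List A) : A :=
  if k % 2 = 0 then listMul l else listMul l.reverse

/-- The swap-reversal property at length `m`. -/
def SwapRev (A : Type*) [Mul A] [Zero A] (m : ℕ) : Prop :=
  ∀ (u : List A) (x y : A) (w : List A), u.length + w.length + 2 = m →
    listMul (u ++ y :: x :: w) = listMul ((u ++ x :: y :: w).reverse)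

/-- Single-swap invariance at length `m`. -/
def SwapInv (A : Type*) [Mul A] [Zero A] (m : ℕ) : Prop :=
  ∀ (u : List A) (x y : A) (w : List A), u.length + w.length + 2 = m →
    listMul (u ++ y :: x :: w) = listMul (u ++ x :: y :: w)

section Aux
variable {A : Type*} [NonUnitalRing A] {n m : ℕ}

lemma listMul_cons (x : A) (l : List A) (h : l ≠ []) :
    listMul (x :: l) = x * listMul l := by
  cases l with
  | nil => exact absurd rfl h
  | cons y t => rfl

lemma listMul_append (l₁ l₂ : List A) (h₁ : l₁ ≠ []) (h₂ : l₂ ≠ []) :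
    listMul (l₁ ++ l₂) = listMul l₁ * listMul l₂ := by
  induction l₁ with
  | nil => exact absurd rfl h₁
  | cons x t ih =>
    cases t with
    | nil => exact listMul_cons x l₂ h₂
    | cons y t' =>
      rw [List.cons_append, listMul_cons x ((y :: t') ++ l₂) (by simp),
        listMul_cons x (y :: t') (by simp), ih (by simp), mul_assoc]

lemma flatten_ne_nil (L : List (List A)) (hL : L ≠ []) (h : ∀ l ∈ L, l ≠ []) :
    L.flatten ≠ [] := by
  cases L with
  | nil => exact absurd rfl hL
  | cons l L' =>
    have hl : l ≠ [] := h l (by simp)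
    cases l with
    | nil => exact absurd rfl hl
    | cons a t => simp

lemma listMul_flatten (L : List (List A)) (h : ∀ l ∈ L, l ≠ []) :
    listMul L.flatten = listMul (L.map listMul) := by
  induction L with
  | nil => rfl
  | cons l L' ih =>
    by_cases hL' : L' = []
    · subst hL'
      simp [listMul]
    · rw [List.flatten_cons, listMul_append l L'.flatten (h l (by simp))
        (flatten_ne_nil L' hL' (fun l' hl' => h l' (by simp [hl']))),
        ih (fun l' hl' => h l' (by simp [hl'])), List.map_cons,
        listMul_cons _ _ (by simpa using hL')]

lemma aux_revn
    (hrev : ∀ a : Fin n → A, finProd a = finProd (fun i => a (Fin.revPerm i)))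
    (l : List A) (h : l.length = n) : listMul l = listMul l.reverse := by
  subst h
  have h1 : List.ofFn (fun i : Fin l.length => l[(i : ℕ)]) = l := List.ofFn_getElem
  have h2 : List.ofFn (fun i : Fin l.length => l[((Fin.revPerm i : Fin l.length) : ℕ)]) =
      l.reverse := by
    apply List.ext_getElem (by simp)
    intro i h₁ h₂
    simp only [List.getElem_ofFn, Fin.revPerm_apply, Fin.rev, List.getElem_reverse]
    congr 1
    omega
  have h3 := hrev (fun i => l[(i : ℕ)])
  unfold finProd at h3
  rw [h1] at h3
  rw [h2] at h3
  exact h3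

lemma aux_glue
    (hrev : ∀ a : Fin n → A, finProd a = finProd (fun i => a (Fin.revPerm i)))
    (L : List (List A)) (hL : L.length = n) (h : ∀ l ∈ L, l ≠ []) :
    listMul L.flatten = listMul L.reverse.flatten := by
  rw [listMul_flatten L h, listMul_flatten L.reverse (fun l hl => h l (by
    exact (List.mem_reverse).1 hl)),
    aux_revn hrev (L.map listMul) (by simp [hL]), List.map_reverse]

lemma flatten_map_single (l : List A) : (l.map (fun a => [a])).flatten = l := by
  induction l with
  | nil => rfl
  | cons x t ih => simp [ih]

/-- Reversal with one glued pair: the core move at word length `n+1`. -/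
lemma aux_swaprev1
    (hrev : ∀ a : Fin n → A, finProd a = finProd (fun i => a (Fin.revPerm i)))
    (u : List A) (x y : A) (w : List A) (h : u.length + w.length + 2 = n + 1) :
    listMul (u ++ y :: x :: w) = listMul ((u ++ x :: y :: w).reverse) := by
  have := aux_glue hrev
    ((u.map (fun a => [a])) ++ ([y, x] :: (w.map (fun a => [a]))))
    (by simp; omega)
    (by intro l hl
        simp only [List.mem_append, List.mem_map, List.mem_cons] at hl
        rcases hl with ⟨a, _, rfl⟩ | rfl | ⟨a, _, rfl⟩ <;> simp)
  simp only [List.flatten_append, List.flatten_cons, flatten_map_single,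
    List.reverse_append, List.reverse_cons, ← List.map_reverse,
    List.append_assoc, List.cons_append, List.nil_append, List.singleton_append] at this ⊢
  exact this

/-- Reversal with two glued pairs: the core odd move at word length `n+2`. -/
lemma aux_glue2
    (hrev : ∀ a : Fin n → A, finProd a = finProd (fun i => a (Fin.revPerm i)))
    (u v w : List A) (p q r s : A) (h : u.length + v.length + w.length + 4 = n + 2) :
    listMul (u ++ p :: q :: (v ++ r :: s :: w)) =
      listMul (w.reverse ++ r :: s :: (v.reverse ++ p :: q :: u.reverse)) := by
  have := aux_glue hrev
    ((u.map (fun a => [a])) ++ ([p, q] :: ((v.map (fun a => [a])) ++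
      ([r, s] :: (w.map (fun a => [a]))))))
    (by simp; omega)
    (by intro l hl
        simp only [List.mem_append, List.mem_map, List.mem_cons] at hl
        rcases hl with ⟨a, _, rfl⟩ | rfl | ⟨a, _, rfl⟩ | rfl | ⟨a, _, rfl⟩ <;> simp)
  simp only [List.flatten_append, List.flatten_cons, flatten_map_single,
    List.reverse_append, List.reverse_cons, ← List.map_reverse,
    List.append_assoc, List.cons_append, List.nil_append, List.singleton_append] at this ⊢
  exact this

lemma Fm_congr {k j : ℕ} (h : k % 2 = j % 2) (l : List A) : Fm k l = Fm j l := by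
  unfold Fm
  rw [h]

lemma Fm_even {k : ℕ} (h : k % 2 = 0) (l : List A) : Fm k l = listMul l := by
  unfold Fm; rw [if_pos h]

lemma Fm_odd {k : ℕ} (h : k % 2 = 1) (l : List A) : Fm k l = listMul l.reverse := by
  unfold Fm; rw [h]; rfl

lemma aux_swapstep (hsr : SwapRev A m) (k : ℕ) (u : List A) (x y : A) (w : List A)
    (h : u.length + w.length + 2 = m) :
    Fm (k + 1) (u ++ y :: x :: w) = Fm k (u ++ x :: y :: w) := by
  rcases Nat.even_or_odd k with hk | hk
  · have h0 : k % 2 = 0 := Nat.even_iff.1 hk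
    rw [Fm_even h0, Fm_odd (by omega)]
    have h2 : (u ++ y :: x :: w).reverse = w.reverse ++ x :: y :: u.reverse := by
      simp
    rw [h2, hsr w.reverse y x u.reverse (by simp; omega)]
    congr 1
    simp
  · have h1 : k % 2 = 1 := Nat.odd_iff.1 hk
    rw [Fm_odd h1, Fm_even (by omega)]
    exact hsr u x y w h

lemma aux_shift (hsr : SwapRev A m) (U : List A) (k : ℕ) (u : List A) (x : A) (w : List A)
    (h : u.length + U.length + w.length + 1 = m) :
    Fm k (u ++ x :: (U ++ w)) = Fm (k + U.length) (u ++ (U ++ x :: w)) := by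
  induction U generalizing k u with
  | nil => simp
  | cons yy U' ih =>
    have step := (aux_swapstep hsr k u x yy (U' ++ w) (by simp at h ⊢; omega)).symm
    calc Fm k (u ++ x :: (yy :: U' ++ w)) = Fm (k + 1) (u ++ yy :: x :: (U' ++ w)) := by
          simpa using step
      _ = Fm (k + 1) ((u ++ [yy]) ++ x :: (U' ++ w)) := by rw [List.append_assoc]; rfl
      _ = Fm (k + 1 + U'.length) ((u ++ [yy]) ++ (U' ++ x :: w)) := by
          exact ih (k + 1) (u ++ [yy]) (by simp at h ⊢; omega)
      _ = Fm (k + (yy :: U').length) (u ++ (yy :: U' ++ x :: w)) := by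
          rw [show k + 1 + U'.length = k + (yy :: U').length by simp; omega]
          congr 1
          simp

lemma aux_revseg (hsr : SwapRev A m) (U : List A) (k : ℕ) (u w : List A)
    (h : u.length + U.length + w.length = m) :
    Fm k (u ++ U ++ w) = Fm (k + U.length.choose 2) (u ++ U.reverse ++ w) := by
  induction U generalizing k w with
  | nil => simp
  | cons x U' ih =>
    have harith : k + U'.length + U'.length.choose 2 = k + (U'.length + 1).choose 2 := by
      have := Nat.choose_succ_succ U'.length 1
      norm_num at this
      omega
    calc Fm k (u ++ (x :: U') ++ w) = Fm k (u ++ x :: (U' ++ w)) := by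
          rw [List.append_assoc]; rfl
      _ = Fm (k + U'.length) (u ++ (U' ++ x :: w)) := by
          exact aux_shift hsr U' k u x w (by simp at h ⊢; omega)
      _ = Fm (k + U'.length) ((u ++ U') ++ x :: w) := by rw [List.append_assoc]
      _ = Fm (k + U'.length + U'.length.choose 2) ((u ++ U'.reverse) ++ x :: w) := by
          have := ih (k + U'.length) (x :: w) (by simp at h ⊢; omega)
          rw [List.append_assoc, List.append_assoc] at this ⊢
          exact this
      _ = Fm (k + (x :: U').length.choose 2) (u ++ (x :: U').reverse ++ w) := by
          rw [List.length_cons, ← harith]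
          congr 1
          simp

lemma aux_swapinv (hsr : SwapRev A m)
    (hrevid : ∀ l : List A, l.length = m → listMul l = listMul l.reverse) :
    SwapInv A m := by
  intro u x y w h
  rw [hsr u x y w h, ← hrevid (u ++ x :: y :: w) (by simp; omega)]

lemma aux_perminv (hsw : SwapInv A m) (l₁ l₂ : List A) (hp : l₁.Perm l₂) :
    ∀ (u : List A), (u ++ l₁).length = m → listMul (u ++ l₁) = listMul (u ++ l₂) := by
  induction hp with
  | nil => intro u h; rfl
  | cons x hp ih =>
    rename_i la lb
    intro u h
    rw [show u ++ x :: la = (u ++ [x]) ++ la from by simp,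
      show u ++ x :: lb = (u ++ [x]) ++ lb from by simp]
    exact ih (u ++ [x]) (by simp at h ⊢; omega)
  | swap x y l =>
    intro u h
    exact hsw u x y l (by simp at h ⊢; omega)
  | trans hp₁ hp₂ ih₁ ih₂ =>
    intro u h
    have hl := hp₁.length_eq
    rw [ih₁ u h, ih₂ u (by simp at h ⊢; omega)]

lemma aux_finperm (hsw : SwapInv A m) (τ : Equiv.Perm (Fin m)) (a : Fin m → A) :
    finProd a = finProd (fun i => a (τ i)) := by
  have hp : (List.ofFn a).Perm (List.ofFn (fun i => a (τ i))) := by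
    rw [List.ofFn_eq_map, List.ofFn_eq_map]
    have h2 : List.map (fun i => a (τ i)) (List.finRange m) =
        List.map a (List.map τ (List.finRange m)) := by
      rw [List.map_map]
      rfl
    rw [h2]
    apply List.Perm.map
    apply List.perm_of_nodup_nodup_toFinset_eq (List.nodup_finRange m)
      ((List.nodup_finRange m).map τ.injective)
    ext i
    simp only [List.mem_toFinset, List.mem_finRange, List.mem_map, true_iff]
    exact ⟨τ.symm i, by simp⟩
  have := aux_perminv hsw (List.ofFn a) (List.ofFn (fun i => a (τ i))) hp []
    (by simp)
  simpa [finProd] using this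

lemma parity_even (hn : n % 4 = 0 ∨ n % 4 = 3) : (n + 1).choose 2 % 2 = 0 := by
  rw [Nat.choose_two_right]
  rcases hn with h0 | h3
  · obtain ⟨t, rfl⟩ : ∃ t, n = 4 * t := ⟨n / 4, by omega⟩
    have e : (4 * t + 1) * (4 * t + 1 - 1) = 2 * ((4 * t + 1) * (2 * t)) := by
      rw [Nat.add_sub_cancel]; ring
    rw [e, Nat.mul_div_cancel_left _ (by norm_num : 0 < 2), Nat.mul_mod]
    have ht : 2 * t % 2 = 0 := by omega
    rw [ht, Nat.mul_zero]
  · obtain ⟨t, rfl⟩ : ∃ t, n = 4 * t + 3 := ⟨n / 4, by omega⟩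
    have e : (4 * t + 3 + 1) * (4 * t + 3 + 1 - 1) = 2 * ((2 * t + 2) * (4 * t + 3)) := by
      rw [Nat.add_sub_cancel]; ring
    rw [e, Nat.mul_div_cancel_left _ (by norm_num : 0 < 2), Nat.mul_mod]
    have ht : (2 * t + 2) % 2 = 0 := by omega
    rw [ht, Nat.zero_mul]

lemma parity_odd (hn : n % 4 = 2) : n.choose 2 % 2 = 1 := by
  rw [Nat.choose_two_right]
  obtain ⟨t, rfl⟩ : ∃ t, n = 4 * t + 2 := ⟨n / 4, by omega⟩
  have e1 : 4 * t + 2 - 1 = 4 * t + 1 := by omega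
  have e : (4 * t + 2) * (4 * t + 2 - 1) = 2 * ((2 * t + 1) * (4 * t + 1)) := by
    rw [e1]; ring
  rw [e, Nat.mul_div_cancel_left _ (by norm_num : 0 < 2), Nat.mul_mod]
  have h1 : (2 * t + 1) % 2 = 1 := by omega
  have h2 : (4 * t + 1) % 2 = 1 := by omega
  rw [h1, h2]

/-- Reversal identity at length `n+1`, when `n % 4 ≠ 1`. -/
lemma aux_revid1
    (hrev : ∀ a : Fin n → A, finProd a = finProd (fun i => a (Fin.revPerm i)))
    (hn : 2 ≤ n) (hmod : n % 4 ≠ 1)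
    (l : List A) (hl : l.length = n + 1) : listMul l = listMul l.reverse := by
  have hsr : SwapRev A (n + 1) := fun u x y w h => aux_swaprev1 hrev u x y w h
  by_cases hc : n % 4 = 2
  · -- use the window move plus a segment reversal of odd swap-length
    cases l with
    | nil => simp at hl
    | cons x W =>
      have hW : W.length = n := by simpa using hl
      have hq : listMul (x :: W) = listMul (x :: W.reverse) := by
        rw [listMul_cons x W (by intro h0; rw [h0] at hW; simp at hW; omega),
          listMul_cons x W.reverse (by simp; intro h0; rw [h0] at hW; simp at hW; omega),
          aux_revn hrev W hW]
      have h2 := aux_revseg hsr W.reverse 0 [x] [] (by simp [hW]; omega)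
      simp only [List.nil_append, List.append_nil, List.singleton_append,
        List.reverse_reverse, List.length_reverse, hW, Nat.zero_add] at h2
      rw [Fm_even (by norm_num) _, Fm_odd (parity_odd hc) _] at h2
      rw [hq, h2]
  · have hce : (n + 1).choose 2 % 2 = 0 := parity_even (by omega)
    have h2 := aux_revseg hsr l 0 [] [] (by simp [hl])
    simp only [List.nil_append, List.append_nil, Nat.zero_add, hl] at h2
    rw [Fm_even (by norm_num) _, Fm_even hce _] at h2
    exact h2

end Aux

section Aux2
variable {A : Type*} [NonUnitalRing A] {n : ℕ}

/-- Glued-pair reversal inside a left context (word length `n+2`). -/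
lemma aux_gval
    (hrev : ∀ a : Fin n → A, finProd a = finProd (fun i => a (Fin.revPerm i)))
    (x : A) (u : List A) (p q : A) (w : List A) (h : u.length + w.length + 2 = n + 1) :
    listMul (x :: (u ++ q :: p :: w)) = listMul (x :: (u ++ p :: q :: w).reverse) := by
  rw [listMul_cons _ _ (by simp), listMul_cons _ _ (by simp),
    aux_swaprev1 hrev u p q w h]

/-- Glued-pair reversal inside a right context (word length `n+2`). -/
lemma aux_hval
    (hrev : ∀ a : Fin n → A, finProd a = finProd (fun i => a (Fin.revPerm i)))
    (z : A) (u : List A) (p q : A) (w : List A) (h : u.length + w.length + 2 = n + 1) :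
    listMul ((u ++ q :: p :: w) ++ [z]) = listMul ((u ++ p :: q :: w).reverse ++ [z]) := by
  rw [listMul_append _ [z] (by simp) (by simp), listMul_append _ [z] (by simp) (by simp),
    aux_swaprev1 hrev u p q w h]

/-- Rotation by two at word length `n+2`. -/
lemma aux_rot2
    (hrev : ∀ a : Fin n → A, finProd a = finProd (fun i => a (Fin.revPerm i)))
    (hn : 2 ≤ n) (x z : A) (M : List A) (hM : M.length = n) :
    listMul (x :: z :: M) = listMul (M ++ [x, z]) := by
  rcases M.eq_nil_or_concat with rfl | ⟨M', a, rfl⟩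
  · simp at hM; omega
  rcases M'.eq_nil_or_concat with rfl | ⟨N, b, rfl⟩
  · simp at hM; omega
  simp only [List.concat_eq_append, List.append_assoc, List.singleton_append] at hM ⊢
  -- now M = N ++ [b, a]
  have hN : N.length = n - 2 := by simp at hM; omega
  have g := aux_gval hrev x [] a b (N.reverse ++ [z])
    (by simp [hN]; omega)
  have hh := aux_hval hrev z [x] a b N.reverse (by simp [hN]; omega)
  simp only [List.nil_append, List.cons_append, List.reverse_cons, List.reverse_append,
    List.reverse_reverse, List.reverse_nil, List.append_assoc, List.singleton_append,
    List.append_nil] at g hh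
  have e : N ++ ([b, a] ++ [x, z]) = N ++ [b, a, x, z] := by simp
  rw [e]
  exact g.symm.trans hh

lemma aux_rot1
    (hrev : ∀ a : Fin n → A, finProd a = finProd (fun i => a (Fin.revPerm i)))
    (hn : 2 ≤ n) (hodd : n % 2 = 1) (l : List A) (hl : l.length = n + 2) :
    listMul l = listMul (l.rotate 1) := by
  have hrot2 : ∀ l : List A, l.length = n + 2 → listMul l = listMul (l.rotate 2) := by
    intro l hl
    match l with
    | x :: z :: M =>
      have hM : M.length = n := by simpa using hl
      have : (x :: z :: M).rotate 2 = M ++ [x, z] := by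
        rw [List.rotate_cons_succ, List.cons_append, List.rotate_cons_succ,
          List.rotate_zero, List.append_assoc]
        rfl
      rw [this]
      exact aux_rot2 hrev hn x z M hM
  have key : ∀ j : ℕ, ∀ l : List A, l.length = n + 2 → listMul l = listMul (l.rotate (2 * j)) := by
    intro j
    induction j with
    | zero => intro l hl; simp
    | succ j ih =>
      intro l hl
      have : l.rotate (2 * (j + 1)) = (l.rotate (2 * j)).rotate 2 := by
        rw [List.rotate_rotate]
        ring_nf
      rw [this, ih l hl, ← hrot2 (l.rotate (2 * j)) (by simp [hl])]
  have h1 := key ((n + 3) / 2) l hl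
  have h2 : 2 * ((n + 3) / 2) = n + 3 := by
    have := hodd
    omega
  rw [h2] at h1
  have h3 : l.rotate (n + 3) = l.rotate 1 := by
    rw [show n + 3 = 1 + (n + 2) from by omega, ← List.rotate_rotate]
    have hlen : (l.rotate 1).length = n + 2 := by simp [hl]
    rw [← hlen]
    exact List.rotate_length _
  rwa [h3] at h1

lemma aux_rot1c
    (hrev : ∀ a : Fin n → A, finProd a = finProd (fun i => a (Fin.revPerm i)))
    (hn : 2 ≤ n) (hodd : n % 2 = 1) (x : A) (U : List A) (hU : U.length = n + 1) :
    listMul (x :: U) = listMul (U ++ [x]) := by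
  have := aux_rot1 hrev hn hodd (x :: U) (by simp [hU])
  rwa [List.rotate_cons_succ, List.rotate_zero] at this

/-- SwapRev at length `n+2`, for odd `n`. -/
lemma aux_swaprev2
    (hrev : ∀ a : Fin n → A, finProd a = finProd (fun i => a (Fin.revPerm i)))
    (hn : 2 ≤ n) (hodd : n % 2 = 1) : SwapRev A (n + 2) := by
  intro u x y w h
  cases u with
  | nil =>
    rcases w.eq_nil_or_concat with rfl | ⟨w', z, rfl⟩
    · simp at h; omega
    simp only [List.concat_eq_append, List.nil_append] at h ⊢
    have hw' : w'.length = n - 1 := by simp at h; omega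
    have hh := aux_hval hrev z [] x y w' (by simp [hw']; omega)
    simp only [List.nil_append] at hh
    have e1 : y :: x :: (w' ++ [z]) = (y :: x :: w') ++ [z] := by simp
    rw [e1, hh]
    have e2 : (x :: y :: (w' ++ [z])).reverse = z :: (x :: y :: w').reverse := by simp
    rw [e2]
    rw [aux_rot1c hrev hn hodd z ((x :: y :: w').reverse) (by simp [hw']; omega)]
  | cons a u' =>
    have g := aux_gval hrev a u' x y w (by simp at h ⊢; omega)
    have e1 : (a :: u') ++ y :: x :: w = a :: (u' ++ y :: x :: w) := by simp
    rw [e1, g]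
    have e2 : ((a :: u') ++ x :: y :: w).reverse = (u' ++ x :: y :: w).reverse ++ [a] := by
      simp
    rw [e2]
    exact aux_rot1c hrev hn hodd a ((u' ++ x :: y :: w).reverse) (by simp at h ⊢; omega)

/-- Reversal identity at length `n+2` when `n % 4 = 1`. -/
lemma aux_revid2
    (hrev : ∀ a : Fin n → A, finProd a = finProd (fun i => a (Fin.revPerm i)))
    (hn : 2 ≤ n) (hmod : n % 4 = 1)
    (l : List A) (hl : l.length = n + 2) : listMul l = listMul l.reverse := by
  have hn5 : 5 ≤ n := by omega
  have hsr2 : SwapRev A (n + 2) := aux_swaprev2 hrev hn (by omega)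
  match l with
  | [] => simp at hl
  | [p] => simp at hl
  | [p, q] => simp at hl; omega
  | [p, q, r] => simp at hl; omega
  | p :: q :: r :: s :: w =>
    have hw : w.length = n - 2 := by simp at hl; omega
    have st1 := aux_swapstep hsr2 1 [] p q (s :: r :: w) (by simp [hw]; omega)
    have st2 := aux_swapstep hsr2 0 [p, q] r s w (by simp [hw]; omega)
    simp only [List.nil_append, List.cons_append, List.append_nil] at st1 st2
    -- st1 : Fm 2 (q :: p :: s :: r :: w) = Fm 1 (p :: q :: s :: r :: w)
    -- st2 : Fm 1 (p :: q :: s :: r :: w) = Fm 0 (p :: q :: r :: s :: w)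
    have g2 := aux_glue2 hrev [] [] w q p s r (by simp [hw]; omega)
    simp only [List.nil_append, List.reverse_nil, List.append_nil] at g2
    -- g2 : listMul (q :: p :: s :: r :: w) = listMul (w.reverse ++ s :: r :: q :: p :: [])
    have e0 : Fm 2 (q :: p :: s :: r :: w) = listMul (q :: p :: s :: r :: w) :=
      Fm_even (by norm_num) _
    have e1 : Fm 0 (p :: q :: r :: s :: w) = listMul (p :: q :: r :: s :: w) :=
      Fm_even (by norm_num) _
    have e2 : (p :: q :: r :: s :: w).reverse = w.reverse ++ s :: r :: q :: p :: [] := by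
      simp
    rw [e2, ← g2, ← e0, st1, st2, e1]
end Aux2

section Final
variable {A : Type*} [NonUnitalRing A] {n : ℕ}

/-- Swap invariance at length `n+2` from swap invariance at length `n+1` (windowing). -/
lemma aux_window (hn : 2 ≤ n) (hsw1 : SwapInv A (n + 1)) : SwapInv A (n + 2) := by
  intro u x y w h
  cases u with
  | nil =>
    rcases w.eq_nil_or_concat with rfl | ⟨w', z, rfl⟩
    · simp at h; omega
    simp only [List.concat_eq_append, List.nil_append] at h ⊢
    have hw' : w'.length = n - 1 := by simp at h; omega
    have e1 : y :: x :: (w' ++ [z]) = (y :: x :: w') ++ [z] := by simp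
    have e2 : x :: y :: (w' ++ [z]) = (x :: y :: w') ++ [z] := by simp
    have hs := hsw1 [] x y w' (by simp [hw']; omega)
    simp only [List.nil_append] at hs
    rw [e1, e2, listMul_append _ [z] (by simp) (by simp),
      listMul_append _ [z] (by simp) (by simp), hs]
  | cons a u' =>
    have e1 : (a :: u') ++ y :: x :: w = a :: (u' ++ y :: x :: w) := by simp
    have e2 : (a :: u') ++ x :: y :: w = a :: (u' ++ x :: y :: w) := by simp
    rw [e1, e2, listMul_cons _ _ (by simp), listMul_cons _ _ (by simp),
      hsw1 u' x y w (by simp at h ⊢; omega)]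

end Final

theorem generalized_comm_eventually_commutative {F A : Type*} [Field F] [NonUnitalRing A] [Module F A]
    [SMulCommClass F A A] [IsScalarTower F A A]
    (n : ℕ) (hn : 2 ≤ n)
    (hrev : ∀ a : Fin n → A, finProd a = finProd (fun i => a (Fin.revPerm i))) :
    ((n % 4 ≠ 1) →
      ∀ τ : Equiv.Perm (Fin (n + 1)), ∀ a : Fin (n + 1) → A,
        finProd a = finProd (fun i => a (τ i))) ∧
    (∀ τ : Equiv.Perm (Fin (n + 2)), ∀ a : Fin (n + 2) → A,
      finProd a = finProd (fun i => a (τ i))) := by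
  have hsr1 : SwapRev A (n + 1) := fun u x y w h => aux_swaprev1 hrev u x y w h
  constructor
  · intro hmod τ a
    exact aux_finperm (aux_swapinv hsr1 (aux_revid1 hrev hn hmod)) τ a
  · intro τ a
    by_cases hmod : n % 4 = 1
    · have hsr2 : SwapRev A (n + 2) := aux_swaprev2 hrev hn (by omega)
      exact aux_finperm (aux_swapinv hsr2 (aux_revid2 hrev hn hmod)) τ a
    · exact aux_finperm (aux_window hn (aux_swapinv hsr1 (aux_revid1 hrev hn hmod))) τ a
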